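/- Let q ≠ 0 and let c_i, d_i, b_i, b_{n+i} (for i = 1,…,n) and a_α, h_α (for α = 1,…,s) be real constants. Define γ : ℝ → E componentwise by γ_i(t) = (c_i/q)·sin(qt + d_i) + b_i, γ_{n+i}(t) = -(c_i/q)·cos(qt + d_i) + b_{n+i}, and γ_{2n+α}(t) = a_α·t + h_α. Then γ is a magnetic curve with charge q, i.e. γ''(t) = -q·φ(γ'(t)) for all t ∈ ℝ. -/

import Mathlib

open scoped RealInnerProductSpace

/-- The structure tensor `φ` of the standard `C`-manifold structure on `ℝ^{2n+s}`:
`(φv)_i = v_{n+i}`, `(φv)_{n+i} = -v_i` for `0 ≤ i < n`, and `(φv)_{2n+α} = 0`. -/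
noncomputable def phi (n s : ℕ) (v : EuclideanSpace ℝ (Fin (2*n+s))) :
    EuclideanSpace ℝ (Fin (2*n+s)) := WithLp.toLp 2 fun k =>
  if _h1 : (k : ℕ) < n then v ⟨n + (k : ℕ), by omega⟩
  else if _h2 : (k : ℕ) < 2*n then -v ⟨(k : ℕ) - n, by omega⟩
  else 0

/-- The index `2n+α` of the characteristic direction `ξ_α = e_{2n+α}`. -/
def idxA (n s : ℕ) (α : Fin s) : Fin (2*n+s) := ⟨2*n + (α : ℕ), by omega⟩

/-- The index `i` for `1 ≤ i ≤ n` (0-based). -/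
def idxI (n s : ℕ) (i : Fin n) : Fin (2*n+s) := ⟨(i : ℕ), by omega⟩

/-- The index `n+i` for `1 ≤ i ≤ n` (0-based). -/
def idxNI (n s : ℕ) (i : Fin n) : Fin (2*n+s) := ⟨n + (i : ℕ), by omega⟩

lemma hasDerivAt_euclid {m : ℕ} {γ : ℝ → EuclideanSpace ℝ (Fin m)}
    {v : EuclideanSpace ℝ (Fin m)} {t : ℝ}
    (h : ∀ k, HasDerivAt (fun t => γ t k) (v k) t) : HasDerivAt γ v t := by
  have h1 : HasDerivAt (fun t k => γ t k) (fun k => v k) t := hasDerivAt_pi.2 h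
  have h2 := (PiLp.continuousLinearEquiv 2 ℝ
    (fun _ : Fin m => ℝ)).symm.hasFDerivAt.comp_hasDerivAt t h1
  exact h2

theorem parametrized_curve_is_magnetic
    (n s : ℕ) (hn : 0 < n) (hs : 0 < s) (q : ℝ) (hq : q ≠ 0)
    (c d b bb : Fin n → ℝ) (a h : Fin s → ℝ)
    (γ : ℝ → EuclideanSpace ℝ (Fin (2*n+s)))
    (hγ1 : ∀ t : ℝ, ∀ i : Fin n,
      γ t (idxI n s i) = c i / q * Real.sin (q * t + d i) + b i)
    (hγ2 : ∀ t : ℝ, ∀ i : Fin n,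
      γ t (idxNI n s i) = -(c i / q) * Real.cos (q * t + d i) + bb i)
    (hγ3 : ∀ t : ℝ, ∀ α : Fin s, γ t (idxA n s α) = a α * t + h α) :
    ∀ t : ℝ, deriv (deriv γ) t = (-q) • phi n s (deriv γ t) := by
  -- first derivative
  set G : ℝ → EuclideanSpace ℝ (Fin (2*n+s)) := fun t => WithLp.toLp 2 fun k =>
    if h1 : (k : ℕ) < n then c ⟨k, h1⟩ * Real.cos (q * t + d ⟨k, h1⟩)
    else if h2 : (k : ℕ) < 2*n then
      c ⟨(k : ℕ) - n, by omega⟩ * Real.sin (q * t + d ⟨(k : ℕ) - n, by omega⟩)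
    else a ⟨(k : ℕ) - 2*n, by omega⟩ with hGdef
  -- second derivative
  set G2 : ℝ → EuclideanSpace ℝ (Fin (2*n+s)) := fun t => WithLp.toLp 2 fun k =>
    if h1 : (k : ℕ) < n then -(q * (c ⟨k, h1⟩ * Real.sin (q * t + d ⟨k, h1⟩)))
    else if h2 : (k : ℕ) < 2*n then
      q * (c ⟨(k : ℕ) - n, by omega⟩ * Real.cos (q * t + d ⟨(k : ℕ) - n, by omega⟩))
    else 0 with hG2def
  have hlin : ∀ t : ℝ, HasDerivAt (fun t : ℝ => q * t + (0:ℝ)) q t := fun t => by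
    simpa using ((hasDerivAt_id t).const_mul q).add_const (0:ℝ)
  have hG : ∀ t, HasDerivAt γ (G t) t := by
    intro t
    apply hasDerivAt_euclid
    intro k
    rcases lt_or_ge (k : ℕ) n with h1 | h1
    · set i : Fin n := ⟨k, h1⟩ with hi
      have hk : idxI n s i = k := by ext; rfl
      have hfun : (fun t => γ t k) = fun t => c i / q * Real.sin (q * t + d i) + b i := by
        funext t; rw [← hk]; exact hγ1 t i
      rw [hfun]
      have hd : HasDerivAt (fun t : ℝ =>
          c i / q * Real.sin (q * t + d i) + b i)
          (c i / q * (Real.cos (q * t + d i) * q)) t := by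
        simpa using ((((hasDerivAt_id t).const_mul q).add_const
          (d i)).sin.const_mul (c i / q)).add_const (b i)
      convert hd using 1
      rw [hGdef]
      simp only [dif_pos h1]
      field_simp
      ring
    · rcases lt_or_ge (k : ℕ) (2*n) with h2 | h2
      · set i : Fin n := ⟨(k : ℕ) - n, by omega⟩ with hi
        have hk : idxNI n s i = k := by ext; simp [idxNI, hi]; omega
        have hfun : (fun t => γ t k) =
            fun t => -(c i / q) * Real.cos (q * t + d i) + bb i := by
          funext t; rw [← hk]; exact hγ2 t i
        rw [hfun]
        have hd : HasDerivAt (fun t : ℝ =>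
            -(c i / q) * Real.cos (q * t + d i) + bb i)
            (-(c i / q) * (-Real.sin (q * t + d i) * q)) t := by
          simpa using ((((hasDerivAt_id t).const_mul q).add_const
            (d i)).cos.const_mul (-(c i / q))).add_const (bb i)
        convert hd using 1
        rw [hGdef]
        simp only [dif_neg (not_lt.2 h1), dif_pos h2]
        field_simp
        ring
      · set α : Fin s := ⟨(k : ℕ) - 2*n, by omega⟩ with hα
        have hk : idxA n s α = k := by ext; simp [idxA, hα]; omega
        have hfun : (fun t => γ t k) = fun t => a α * t + h α := by
          funext t; rw [← hk]; exact hγ3 t α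
        rw [hfun]
        have hd : HasDerivAt (fun t : ℝ => a α * t + h α) (a α) t := by
          simpa using ((hasDerivAt_id t).const_mul (a α)).add_const (h α)
        convert hd using 1
        rw [hGdef]
        simp only [dif_neg (not_lt.2 h1), dif_neg (not_lt.2 h2)]
        rfl
  have hG2 : ∀ t, HasDerivAt G (G2 t) t := by
    intro t
    apply hasDerivAt_euclid
    intro k
    rcases lt_or_ge (k : ℕ) n with h1 | h1
    · have hfun : (fun t => G t k) =
          fun t => c ⟨k, h1⟩ * Real.cos (q * t + d ⟨k, h1⟩) := by
        funext t; rw [hGdef]; simp only [dif_pos h1]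
      rw [hfun]
      have hd : HasDerivAt (fun t : ℝ => c ⟨k, h1⟩ * Real.cos (q * t + d ⟨k, h1⟩))
          (c ⟨k, h1⟩ * (-Real.sin (q * t + d ⟨k, h1⟩) * q)) t := by
        simpa using (((hasDerivAt_id t).const_mul q).add_const (d ⟨k, h1⟩)).cos.const_mul (c ⟨k, h1⟩)
      convert hd using 1
      rw [hG2def]
      simp only [dif_pos h1]
      ring
    · rcases lt_or_ge (k : ℕ) (2*n) with h2 | h2
      · have hfun : (fun t => G t k) = fun t =>
            c ⟨(k : ℕ) - n, by omega⟩ *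
              Real.sin (q * t + d ⟨(k : ℕ) - n, by omega⟩) := by
          funext t; rw [hGdef]; simp only [dif_neg (not_lt.2 h1), dif_pos h2]
        rw [hfun]
        have hd : HasDerivAt (fun t : ℝ =>
            c ⟨(k : ℕ) - n, by omega⟩ *
              Real.sin (q * t + d ⟨(k : ℕ) - n, by omega⟩))
            (c ⟨(k : ℕ) - n, by omega⟩ *
              (Real.cos (q * t + d ⟨(k : ℕ) - n, by omega⟩) * q)) t := by
          simpa using (((hasDerivAt_id t).const_mul q).add_const
            (d ⟨(k : ℕ) - n, by omega⟩)).sin.const_mul (c ⟨(k : ℕ) - n, by omega⟩)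
        convert hd using 1
        rw [hG2def]
        simp only [dif_neg (not_lt.2 h1), dif_pos h2]
        ring
      · have hfun : (fun t => G t k) = fun _ => a ⟨(k : ℕ) - 2*n, by omega⟩ := by
          funext t; rw [hGdef]; simp only [dif_neg (not_lt.2 h1), dif_neg (not_lt.2 h2)]
        rw [hfun]
        have hd : HasDerivAt (fun _ : ℝ => a ⟨(k : ℕ) - 2*n, by omega⟩) 0 t :=
          hasDerivAt_const t (a ⟨(k : ℕ) - 2*n, by omega⟩)
        convert hd using 1
        rw [hG2def]
        simp only [dif_neg (not_lt.2 h1), dif_neg (not_lt.2 h2)]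
  intro t
  have hdγ : deriv γ = G := funext fun t => (hG t).deriv
  rw [hdγ, (hG2 t).deriv]
  ext k
  show G2 t k = ((-q) • phi n s (G t)) k
  rw [PiLp.smul_apply, smul_eq_mul]
  unfold phi
  rcases lt_or_ge (k : ℕ) n with h1 | h1
  · rw [hG2def, hGdef]
    simp only [dif_pos h1]
    have hnk1 : ¬ (n + (k : ℕ) < n) := by omega
    have hnk2 : n + (k : ℕ) < 2*n := by omega
    simp only [dif_neg hnk1, dif_pos hnk2]
    have : n + (k : ℕ) - n = (k : ℕ) := by omega
    simp only [this]
    ring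
  · rcases lt_or_ge (k : ℕ) (2*n) with h2 | h2
    · rw [hG2def, hGdef]
      simp only [dif_neg (not_lt.2 h1), dif_pos h2]
      have hkn : (k : ℕ) - n < n := by omega
      simp only [dif_pos hkn]
      ring
    · rw [hG2def]
      simp only [dif_neg (not_lt.2 h1), dif_neg (not_lt.2 h2)]
      ring
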